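/- Let A,B>0, ρ*≥0, θ=ρ*/(B+ρ*), k∈[0,1), J∈ℕ with J≥1, Δx=1/J, x_j=(j−1/2)Δx, Δt>0, and let β>0 satisfy e^{−β}>2k. Set a=θ(2k−e^{−β})/(1−k), K_Δ=Δx·e^{βΔx/2}(e^β−1)/(e^{βΔx}−1), Φ=max{0, (2−e^{βΔx/2})(2k−e^{−β}) + 2(1−k)e^{−βΔx/2} + ((2k−e^{−β})/(1−k))²}, and assume G := βe^{−βΔx} − Φ·K_Δ·θ² > 0. Let ρ_j^n∈ℝ for j∈{0,…,J} and a fixed n, and d^n∈ℝ, satisfy: W^n=Δx·Σ_{j=1}^Jρ_j^n with B+ρ*+W^n>0, λ^n=A/(B+ρ*+W^n), 0 < r^n := λ^nΔt/Δx ≤ 1, the boundary relation ρ_0^n = kρ_J^n + (1−k)θW^n + k·d^n, and the upwind update ρ_j^{n+1}=(1−r^n)ρ_j^n + r^nρ_{j−1}^n for j∈{1,…,J}, with W^{n+1}=Δx·Σ_{j=1}^Jρ_j^{n+1}. Define L^m = Δx·Σ_{j=1}^J(ρ_j^m)²e^{−βx_j} + a(W^m)² for m∈{n,n+1}. Then (L^{n+1}−L^n)/Δt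 ≤ −G·λ^n·L^n + k²(1+2e^{−βΔx/2})·λ^n·(d^n)². -/

import Mathlib

open Real Finset

noncomputable def expw (β Δx : ℝ) (j : ℕ) : ℝ := Real.exp (-β * (((j : ℝ) - 1 / 2) * Δx))

lemma expw_pos (β Δx : ℝ) (j : ℕ) : 0 < expw β Δx j := Real.exp_pos _

lemma expw_succ (β Δx : ℝ) (i : ℕ) :
    expw β Δx (i + 1) = Real.exp (-β * Δx) * expw β Δx i := by
  unfold expw; rw [← Real.exp_add]; congr 1; push_cast; ring

lemma expw_zero (β Δx : ℝ) :
    Real.exp (-β * Δx) * expw β Δx 0 = Real.exp (-β * Δx / 2) := by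
  unfold expw; rw [← Real.exp_add]; congr 1; norm_num; ring

lemma sum_Icc_one (J : ℕ) (f : ℕ → ℝ) :
    ∑ j ∈ Finset.Icc 1 J, f j = ∑ i ∈ Finset.range J, f (i + 1) := by
  rw [← Finset.Ico_add_one_right_eq_Icc, Finset.sum_Ico_eq_sum_range]
  simp [Nat.add_comm]

lemma shift_sum (g : ℕ → ℝ) (n : ℕ) (hn : 1 ≤ n) :
    ∑ i ∈ Finset.range n, g i
      = g 0 + ∑ i ∈ Finset.range n, g (i + 1) - g n := by
  obtain ⟨m, rfl⟩ := Nat.exists_eq_add_of_le hn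
  rw [show 1 + m = m + 1 from Nat.add_comm 1 m]
  rw [Finset.sum_range_succ' g m, Finset.sum_range_succ (fun i => g (i + 1)) m]
  ring

lemma convex_sq {r x y : ℝ} (h0 : 0 ≤ r) (h1 : r ≤ 1) :
    ((1 - r) * x + r * y) ^ 2 ≤ (1 - r) * x ^ 2 + r * y ^ 2 := by
  nlinarith [mul_nonneg (mul_nonneg h0 (sub_nonneg.mpr h1)) (sq_nonneg (x - y))]

lemma half_weight_sq (β Δx : ℝ) (i : ℕ) :
    Real.exp (-β * ((((i : ℝ) + 1) - 1 / 2) * Δx) / 2) ^ 2 = expw β Δx (i + 1) := by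
  unfold expw; rw [sq, ← Real.exp_add]; congr 1; push_cast; ring

lemma half_weight_inv_sq (β Δx : ℝ) (i : ℕ) :
    (Real.exp (-β * ((((i : ℝ) + 1) - 1 / 2) * Δx) / 2))⁻¹ ^ 2
      = Real.exp (β * Δx / 2) * Real.exp (β * Δx) ^ i := by
  rw [← Real.exp_neg, sq, ← Real.exp_add, ← Real.exp_nat_mul, ← Real.exp_add]
  congr 1; push_cast; ring

lemma boundary_est (p c k ν Φ u w d : ℝ)
    (hp : 0 < p) (hk0 : 0 ≤ k) (hk1 : k < 1) (hν : ν ≤ 0)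
    (hc : c = 2 * k - ν * (1 - k))
    (hΦ : (2 - 1 / p) * (ν * (1 - k)) + 2 * (1 - k) * p + ν ^ 2 ≤ Φ) :
    p * (k * u + (1 - k) * w + k * d) ^ 2 - p * c * u ^ 2
      + 2 * ν * w * ((1 - k) * (w - u) + k * d)
      ≤ Φ * w ^ 2 + k ^ 2 * (1 + 2 * p) * d ^ 2 := by
  have hA : p * ((k * u + (1 - k) * w) + k * d) ^ 2
      ≤ 2 * p * (k * u + (1 - k) * w) ^ 2 + 2 * p * k ^ 2 * d ^ 2 := by
    nlinarith [mul_nonneg hp.le (sq_nonneg ((k * u + (1 - k) * w) - k * d))]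
  have hB : 2 * ν * k * w * d ≤ ν ^ 2 * w ^ 2 + k ^ 2 * d ^ 2 := by
    nlinarith [sq_nonneg (ν * w - k * d)]
  have hC : 2 * p * (k * u + (1 - k) * w) ^ 2 - p * c * u ^ 2
      + 2 * ν * (1 - k) * w * (w - u)
      ≤ ((2 - 1 / p) * (ν * (1 - k)) + 2 * (1 - k) * p) * w ^ 2 := by
    have hkey : p * ((((2 - 1 / p) * (ν * (1 - k)) + 2 * (1 - k) * p) * w ^ 2)
        - (2 * p * (k * u + (1 - k) * w) ^ 2 - p * c * u ^ 2
          + 2 * ν * (1 - k) * w * (w - u)))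
        = (-(ν * (1 - k))) * (p * u - w) ^ 2 + 2 * p ^ 2 * k * (1 - k) * (u - w) ^ 2 := by
      rw [hc]; field_simp; ring
    have h1 : 0 ≤ (-(ν * (1 - k))) * (p * u - w) ^ 2 :=
      mul_nonneg (by nlinarith) (sq_nonneg _)
    have h2 : 0 ≤ 2 * p ^ 2 * k * (1 - k) * (u - w) ^ 2 := by
      have h2' : (0:ℝ) ≤ 2 * p ^ 2 * k * (1 - k) :=
        mul_nonneg (mul_nonneg (by positivity) hk0) (by linarith)
      exact mul_nonneg h2' (sq_nonneg _)
    have h3 : p * 0 ≤ p * ((((2 - 1 / p) * (ν * (1 - k)) + 2 * (1 - k) * p) * w ^ 2)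
        - (2 * p * (k * u + (1 - k) * w) ^ 2 - p * c * u ^ 2
          + 2 * ν * (1 - k) * w * (w - u))) := by
      rw [hkey]; simpa using add_nonneg h1 h2
    have h4 := le_of_mul_le_mul_left h3 hp
    linarith
  linarith [hA, hB, hC, mul_nonneg (sub_nonneg.mpr hΦ) (sq_nonneg w)]

set_option maxHeartbeats 800000 in
/-- One-step dissipation estimate for the discrete ISS-Lyapunov function
along the upwind scheme. -/
theorem discrete_lyapunov_one_step_dissipation
    (A B ρs θ k : ℝ) (J : ℕ) (Δx Δt β a K Φ G : ℝ)
    (hA : 0 < A) (hB : 0 < B) (hρs : 0 ≤ ρs) (hθ : θ = ρs / (B + ρs))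
    (hk0 : 0 ≤ k) (hk1 : k < 1)
    (hJ : 1 ≤ J) (hΔx : Δx = 1 / (J : ℝ)) (hΔt : 0 < Δt)
    (hβ : 0 < β) (hkβ : 2 * k < Real.exp (-β))
    (ha : a = θ * (2 * k - Real.exp (-β)) / (1 - k))
    (hK : K = Δx * Real.exp (β * Δx / 2) * (Real.exp β - 1) / (Real.exp (β * Δx) - 1))
    (hΦ : Φ = max 0 ((2 - Real.exp (β * Δx / 2)) * (2 * k - Real.exp (-β))
      + 2 * (1 - k) * Real.exp (-β * Δx / 2)
      + ((2 * k - Real.exp (-β)) / (1 - k)) ^ 2))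
    (hG : G = β * Real.exp (-β * Δx) - Φ * K * θ ^ 2) (hGpos : 0 < G)
    (ρ ρ' : ℕ → ℝ) (dn W W' lam r L L' : ℝ)
    (hW : W = Δx * ∑ j ∈ Finset.Icc 1 J, ρ j) (hWpos : 0 < B + ρs + W)
    (hlam : lam = A / (B + ρs + W)) (hr : r = lam * Δt / Δx)
    (hr0 : 0 < r) (hr1 : r ≤ 1)
    (hbc : ρ 0 = k * ρ J + (1 - k) * θ * W + k * dn)
    (hupd : ∀ j ∈ Finset.Icc 1 J, ρ' j = (1 - r) * ρ j + r * ρ (j - 1))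
    (hW' : W' = Δx * ∑ j ∈ Finset.Icc 1 J, ρ' j)
    (hL : L = Δx * ∑ j ∈ Finset.Icc 1 J,
      (ρ j) ^ 2 * Real.exp (-β * (((j : ℝ) - 1 / 2) * Δx)) + a * W ^ 2)
    (hL' : L' = Δx * ∑ j ∈ Finset.Icc 1 J,
      (ρ' j) ^ 2 * Real.exp (-β * (((j : ℝ) - 1 / 2) * Δx)) + a * W' ^ 2) :
    (L' - L) / Δt ≤ -G * lam * L + k ^ 2 * (1 + 2 * Real.exp (-β * Δx / 2)) * lam * dn ^ 2 := by
  -- notation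
  set c := Real.exp (-β) with hc_def
  set pp := Real.exp (-β * Δx / 2) with hpp_def
  set q := Real.exp (-β * Δx) with hq_def
  clear_value c pp q
  have hJR : (1:ℝ) ≤ (J : ℝ) := by exact_mod_cast hJ
  have hJpos : (0:ℝ) < (J : ℝ) := by linarith
  have hΔx0 : 0 < Δx := by rw [hΔx]; positivity
  have hJΔx : (J : ℝ) * Δx = 1 := by
    rw [hΔx, mul_one_div, div_self (ne_of_gt hJpos)]
  have hk1' : (0:ℝ) < 1 - k := by linarith
  have hpp0 : 0 < pp := by rw [hpp_def]; exact Real.exp_pos _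
  have hq0 : 0 < q := by rw [hq_def]; exact Real.exp_pos _
  have hθ0 : 0 ≤ θ := by rw [hθ]; exact div_nonneg hρs (by linarith)
  have hΦ0 : 0 ≤ Φ := by rw [hΦ]; exact le_max_left _ _
  have ha_np : a ≤ 0 := by
    have h1 : a * (1 - k) = θ * (2 * k - c) := by rw [ha]; field_simp
    nlinarith only [h1, hk1', mul_nonpos_of_nonneg_of_nonpos hθ0 (by linarith : 2 * k - c ≤ 0)]
  -- sums over range
  set S := ∑ i ∈ Finset.range J, (ρ (i + 1)) ^ 2 * expw β Δx (i + 1) with hS_def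
  set S' := ∑ i ∈ Finset.range J, (ρ' (i + 1)) ^ 2 * expw β Δx (i + 1) with hS'_def
  set T := ∑ i ∈ Finset.range J, (ρ i) ^ 2 * expw β Δx (i + 1) with hT_def
  clear_value S S' T
  have hSnonneg : 0 ≤ S := by
    rw [hS_def]
    exact Finset.sum_nonneg fun i _ => mul_nonneg (sq_nonneg _) (expw_pos β Δx _).le
  have hLS : L = Δx * S + a * W ^ 2 := by
    rw [hL, sum_Icc_one, hS_def]; simp only [expw]
  have hL'S : L' = Δx * S' + a * W' ^ 2 := by
    rw [hL', sum_Icc_one, hS'_def]; simp only [expw]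
  have hWr : W = Δx * ∑ i ∈ Finset.range J, ρ (i + 1) := by rw [hW, sum_Icc_one]
  have hupd' : ∀ i ∈ Finset.range J, ρ' (i + 1) = (1 - r) * ρ (i + 1) + r * ρ i := by
    intro i hi
    have hi' : i + 1 ∈ Finset.Icc 1 J := by
      rw [Finset.mem_Icc]; rw [Finset.mem_range] at hi; omega
    simpa using hupd (i + 1) hi'
  -- weight identities
  have hE0 : q * expw β Δx 0 = pp := by rw [hq_def, hpp_def]; exact expw_zero β Δx
  have hEJ : q * expw β Δx J = c * pp := by
    rw [hq_def, hc_def, hpp_def]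
    unfold expw
    rw [← Real.exp_add, ← Real.exp_add]
    congr 1
    linear_combination (-β) * hJΔx
  -- step 1: decay of the weighted sum
  have hS'le : S' ≤ (1 - r) * S + r * T := by
    have hterm : ∀ i ∈ Finset.range J,
        (ρ' (i + 1)) ^ 2 * expw β Δx (i + 1)
          ≤ ((1 - r) * (ρ (i + 1)) ^ 2 + r * (ρ i) ^ 2) * expw β Δx (i + 1) := by
      intro i hi
      exact mul_le_mul_of_nonneg_right
        (by rw [hupd' i hi]; exact convex_sq hr0.le hr1) (expw_pos β Δx _).le
    calc S' ≤ ∑ i ∈ Finset.range J,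
          ((1 - r) * (ρ (i + 1)) ^ 2 + r * (ρ i) ^ 2) * expw β Δx (i + 1) := by
          rw [hS'_def]; exact Finset.sum_le_sum hterm
      _ = (1 - r) * S + r * T := by
          rw [hS_def, hT_def]
          simp only [add_mul, mul_assoc]
          rw [Finset.sum_add_distrib, ← Finset.mul_sum, ← Finset.mul_sum]
  -- step 2: the shifted sum
  have hT : T = pp * (ρ 0) ^ 2 + q * S - c * pp * (ρ J) ^ 2 := by
    have h1 : T = q * ∑ i ∈ Finset.range J, (ρ i) ^ 2 * expw β Δx i := by
      rw [hT_def, Finset.mul_sum]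
      exact Finset.sum_congr rfl fun i _ => by rw [expw_succ, ← hq_def]; ring
    have h2 := shift_sum (fun i => (ρ i) ^ 2 * expw β Δx i) J hJ
    rw [h1, h2, ← hS_def]
    linear_combination (ρ 0) ^ 2 * hE0 - (ρ J) ^ 2 * hEJ
  -- exp inequality
  have hexp : β * Δx * q ≤ 1 - q := by
    have h1 : Real.exp (β * Δx) * q = 1 := by
      rw [hq_def, ← Real.exp_add, show β * Δx + -β * Δx = 0 by ring, Real.exp_zero]
    nlinarith only [mul_le_mul_of_nonneg_right (Real.add_one_le_exp (β * Δx)) hq0.le, h1]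
  have hS'S : S' ≤ S - r * (β * Δx * q) * S + r * pp * ((ρ 0) ^ 2 - c * (ρ J) ^ 2) := by
    have h4 : r * ((β * Δx * q) * S) ≤ r * ((1 - q) * S) :=
      mul_le_mul_of_nonneg_left (mul_le_mul_of_nonneg_right hexp hSnonneg) hr0.le
    rw [hT] at hS'le
    linarith only [hS'le, h4]
  -- step 3: evolution of W
  have hW'2 : W' = W + r * Δx * (ρ 0 - ρ J) := by
    have hshift := shift_sum ρ J hJ
    rw [hW', sum_Icc_one, Finset.sum_congr rfl hupd', hWr,
      Finset.sum_add_distrib, ← Finset.mul_sum, ← Finset.mul_sum, hshift]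
    ring
  have hWa : a * W' ^ 2 ≤ a * W ^ 2 + 2 * a * (r * Δx) * W * (ρ 0 - ρ J) := by
    rw [hW'2]
    nlinarith only [mul_nonpos_of_nonpos_of_nonneg ha_np (sq_nonneg (r * Δx * (ρ 0 - ρ J)))]
  -- step 4: Cauchy–Schwarz
  have hCS : W ^ 2 ≤ K * (Δx * S) := by
    have hcs := Finset.sum_mul_sq_le_sq_mul_sq (Finset.range J)
      (fun i => ρ (i + 1) * Real.exp (-β * ((((i : ℝ) + 1) - 1 / 2) * Δx) / 2))
      (fun i => (Real.exp (-β * ((((i : ℝ) + 1) - 1 / 2) * Δx) / 2))⁻¹)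
    have e1 : ∑ i ∈ Finset.range J,
        (ρ (i + 1) * Real.exp (-β * ((((i : ℝ) + 1) - 1 / 2) * Δx) / 2))
          * (Real.exp (-β * ((((i : ℝ) + 1) - 1 / 2) * Δx) / 2))⁻¹
        = ∑ i ∈ Finset.range J, ρ (i + 1) :=
      Finset.sum_congr rfl fun i _ => by
        field_simp
    have e2 : ∑ i ∈ Finset.range J,
        (ρ (i + 1) * Real.exp (-β * ((((i : ℝ) + 1) - 1 / 2) * Δx) / 2)) ^ 2 = S := by
      rw [hS_def]
      exact Finset.sum_congr rfl fun i _ => by rw [mul_pow, half_weight_sq]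
    have e3 : ∑ i ∈ Finset.range J,
        ((Real.exp (-β * ((((i : ℝ) + 1) - 1 / 2) * Δx) / 2))⁻¹) ^ 2
        = Real.exp (β * Δx / 2) * ((Real.exp β - 1) / (Real.exp (β * Δx) - 1)) := by
      rw [Finset.sum_congr rfl fun i _ => half_weight_inv_sq β Δx i, ← Finset.mul_sum]
      have hne : Real.exp (β * Δx) ≠ 1 := by
        have : (1:ℝ) < Real.exp (β * Δx) := by
          rw [show (1:ℝ) = Real.exp 0 from (Real.exp_zero).symm]
          exact Real.exp_lt_exp.mpr (by positivity)
        exact ne_of_gt this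
      rw [geom_sum_eq hne J, ← Real.exp_nat_mul,
        show (J:ℝ) * (β * Δx) = β from by linear_combination β * hJΔx]
    rw [e1, e2, e3] at hcs
    calc W ^ 2 = Δx ^ 2 * (∑ i ∈ Finset.range J, ρ (i + 1)) ^ 2 := by rw [hWr]; ring
      _ ≤ Δx ^ 2 * (S * (Real.exp (β * Δx / 2) * ((Real.exp β - 1) / (Real.exp (β * Δx) - 1)))) :=
          mul_le_mul_of_nonneg_left hcs (sq_nonneg Δx)
      _ = K * (Δx * S) := by rw [hK]; ring
  -- step 5: the boundary estimate
  have hν : (2 * k - c) / (1 - k) ≤ 0 :=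
    div_nonpos_of_nonpos_of_nonneg (by linarith) (by linarith)
  have hc' : c = 2 * k - ((2 * k - c) / (1 - k)) * (1 - k) := by field_simp; ring
  have hinv : 1 / pp = Real.exp (β * Δx / 2) := by
    rw [hpp_def, one_div, ← Real.exp_neg]
    congr 1; ring
  have hΦ' : (2 - 1 / pp) * (((2 * k - c) / (1 - k)) * (1 - k)) + 2 * (1 - k) * pp
      + ((2 * k - c) / (1 - k)) ^ 2 ≤ Φ := by
    have h1 : ((2 * k - c) / (1 - k)) * (1 - k) = 2 * k - c := by field_simp
    have hX : (2 - 1 / pp) * (((2 * k - c) / (1 - k)) * (1 - k)) + 2 * (1 - k) * pp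
        + ((2 * k - c) / (1 - k)) ^ 2
        = (2 - Real.exp (β * Δx / 2)) * (2 * k - c) + 2 * (1 - k) * pp
          + ((2 * k - c) / (1 - k)) ^ 2 := by
      rw [h1, hinv]
    rw [hΦ, hX]
    exact le_max_right _ _
  have hbd0 := boundary_est pp c k ((2 * k - c) / (1 - k)) Φ (ρ J) (θ * W) dn
    hpp0 hk0 hk1 hν hc' hΦ'
  have hbdL : pp * ((ρ 0) ^ 2 - c * (ρ J) ^ 2) + 2 * a * W * (ρ 0 - ρ J)
      = pp * (k * (ρ J) + (1 - k) * (θ * W) + k * dn) ^ 2 - pp * c * (ρ J) ^ 2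
        + 2 * ((2 * k - c) / (1 - k)) * (θ * W)
          * ((1 - k) * ((θ * W) - (ρ J)) + k * dn) := by
    rw [hbc, ha]; field_simp; ring
  have hbd : pp * ((ρ 0) ^ 2 - c * (ρ J) ^ 2) + 2 * a * W * (ρ 0 - ρ J)
      ≤ Φ * (θ * W) ^ 2 + k ^ 2 * (1 + 2 * pp) * dn ^ 2 := by
    rw [hbdL]; exact hbd0
  -- step 6: assembling
  have hXY : -(β * Δx * q * S) + pp * ((ρ 0) ^ 2 - c * (ρ J) ^ 2)
      + 2 * a * W * (ρ 0 - ρ J) ≤ -G * L + k ^ 2 * (1 + 2 * pp) * dn ^ 2 := by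
    have hCSprod : Φ * θ ^ 2 * W ^ 2 ≤ Φ * θ ^ 2 * (K * (Δx * S)) :=
      mul_le_mul_of_nonneg_left hCS (mul_nonneg hΦ0 (sq_nonneg θ))
    have hGa : (β * q - Φ * K * θ ^ 2) * (a * W ^ 2) ≤ 0 := by
      rw [← hG]
      exact mul_nonpos_of_nonneg_of_nonpos hGpos.le
        (mul_nonpos_of_nonpos_of_nonneg ha_np (sq_nonneg W))
    rw [hG, hLS]
    nlinarith only [hbd, hCSprod, hGa]
  have hstep : L' - L ≤ (r * Δx) * (-(β * Δx * q * S)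
      + pp * ((ρ 0) ^ 2 - c * (ρ J) ^ 2) + 2 * a * W * (ρ 0 - ρ J)) := by
    have h1 : Δx * S' ≤ Δx * (S - r * (β * Δx * q) * S
        + r * pp * ((ρ 0) ^ 2 - c * (ρ J) ^ 2)) :=
      mul_le_mul_of_nonneg_left hS'S hΔx0.le
    rw [hLS, hL'S]
    nlinarith only [h1, hWa]
  have hfin : L' - L ≤ (r * Δx) * (-G * L + k ^ 2 * (1 + 2 * pp) * dn ^ 2) :=
    le_trans hstep (mul_le_mul_of_nonneg_left hXY (mul_nonneg hr0.le hΔx0.le))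
  rw [div_le_iff₀ hΔt]
  have heq : (r * Δx) * (-G * L + k ^ 2 * (1 + 2 * pp) * dn ^ 2)
      = (-G * lam * L + k ^ 2 * (1 + 2 * pp) * lam * dn ^ 2) * Δt := by
    rw [hr]; field_simp
  linarith only [hfin, heq.le, heq.ge]
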